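/- First-order diagonalization identity (equation (13) in the proof of Proposition 1): Let A = D ⊕ D be a 2n×2n positive definite matrix, where D is an n×n diagonal matrix with positive nondecreasing diagonal entries. Then there exist constants c > 0 and δ > 0 such that for every 2n×2n real symmetric matrix H with ‖H‖ < δ and A + H positive definite, and every S̃ ∈ Sp(2n; A+H), one has ‖S̃ᵀ(A+H)S̃ − A‖ ≤ c‖H‖. -/

import Mathlib

open Matrix
open scoped Matrix.Norms.L2Operator Classical

/-- The canonical symplectic form matrix `((0, Iₘ), (−Iₘ, 0))` (the paper's `J₂ₘ`). -/
def J' (m : Type*) [Fintype m] [DecidableEq m] : Matrix (m ⊕ m) (m ⊕ m) ℝ :=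
  Matrix.fromBlocks 0 1 (-1) 0

section Auxiliary

lemma J'_mul_J' (m : Type*) [Fintype m] [DecidableEq m] : J' m * J' m = -1 := by
  simp [J', Matrix.fromBlocks_multiply, ← Matrix.fromBlocks_one, Matrix.fromBlocks_neg]

lemma J'_transpose (m : Type*) [Fintype m] [DecidableEq m] : (J' m)ᵀ = -(J' m) := by
  simp [J', Matrix.fromBlocks_transpose, Matrix.fromBlocks_neg]

lemma J'_conj_diag (m : Type*) [Fintype m] [DecidableEq m] (u : m → ℝ) :
    J' m * Matrix.diagonal (Sum.elim u u) * J' m = -(Matrix.diagonal (Sum.elim u u)) := by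
  rw [← Matrix.fromBlocks_diagonal]
  simp only [J', Matrix.fromBlocks_multiply, Matrix.fromBlocks_neg]
  simp [Matrix.fromBlocks_multiply]

lemma sympl_pack {n : ℕ} (B S : Matrix (Fin n ⊕ Fin n) (Fin n ⊕ Fin n) ℝ)
    (hS : Sᵀ * J' (Fin n) * S = J' (Fin n)) (e : Fin n → ℝ)
    (hepos : ∀ k, 0 < e k)
    (hSB : Sᵀ * B * S = Matrix.diagonal (Sum.elim e e)) :
    ∃ Si Bi : Matrix (Fin n ⊕ Fin n) (Fin n ⊕ Fin n) ℝ,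
      Si * S = 1 ∧ S * Si = 1 ∧ B * Bi = 1 ∧ Biᵀ = Bi ∧
      Sᵀ * ((J' (Fin n))ᵀ * Bi * J' (Fin n)) * S
        = Matrix.diagonal (Sum.elim (fun k => (e k)⁻¹) (fun k => (e k)⁻¹)) := by
  have hJJ : J' (Fin n) * J' (Fin n) = -1 := J'_mul_J' (Fin n)
  have h1 : (-(J' (Fin n) * Sᵀ * J' (Fin n))) * S = 1 := by
    have h : (-(J' (Fin n) * Sᵀ * J' (Fin n))) * S
        = -(J' (Fin n) * (Sᵀ * J' (Fin n) * S)) := by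
      simp only [Matrix.neg_mul, Matrix.mul_assoc]
    rw [h, hS, hJJ, neg_neg]
  have h2 : S * (-(J' (Fin n) * Sᵀ * J' (Fin n))) = 1 := mul_eq_one_comm.mp h1
  have hDgDi : Matrix.diagonal (Sum.elim e e)
      * Matrix.diagonal (Sum.elim (fun k => (e k)⁻¹) (fun k => (e k)⁻¹)) = 1 := by
    rw [Matrix.diagonal_mul_diagonal]
    have h : (fun i => Sum.elim e e i * Sum.elim (fun k => (e k)⁻¹) (fun k => (e k)⁻¹) i)
        = fun _ => (1 : ℝ) := by
      funext i
      rcases i with k | k <;> exact mul_inv_cancel₀ (ne_of_gt (hepos k))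
    rw [h, Matrix.diagonal_one]
  have hBeq : B = (-(J' (Fin n) * Sᵀ * J' (Fin n)))ᵀ * Matrix.diagonal (Sum.elim e e)
      * (-(J' (Fin n) * Sᵀ * J' (Fin n))) := by
    calc B = (S * (-(J' (Fin n) * Sᵀ * J' (Fin n))))ᵀ * B
        * (S * (-(J' (Fin n) * Sᵀ * J' (Fin n)))) := by
          rw [h2, Matrix.transpose_one, Matrix.one_mul, Matrix.mul_one]
    _ = (-(J' (Fin n) * Sᵀ * J' (Fin n)))ᵀ * (Sᵀ * B * S)
        * (-(J' (Fin n) * Sᵀ * J' (Fin n))) := by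
          rw [Matrix.transpose_mul]
          simp only [Matrix.mul_assoc]
    _ = _ := by rw [hSB]
  refine ⟨-(J' (Fin n) * Sᵀ * J' (Fin n)),
    S * Matrix.diagonal (Sum.elim (fun k => (e k)⁻¹) (fun k => (e k)⁻¹)) * Sᵀ, h1, h2, ?_, ?_, ?_⟩
  · calc B * (S * Matrix.diagonal (Sum.elim (fun k => (e k)⁻¹) (fun k => (e k)⁻¹)) * Sᵀ)
        = (-(J' (Fin n) * Sᵀ * J' (Fin n)))ᵀ * (Matrix.diagonal (Sum.elim e e)
          * (((-(J' (Fin n) * Sᵀ * J' (Fin n))) * S)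
            * (Matrix.diagonal (Sum.elim (fun k => (e k)⁻¹) (fun k => (e k)⁻¹)) * Sᵀ))) := by
          rw [hBeq]
          simp only [Matrix.mul_assoc]
    _ = (-(J' (Fin n) * Sᵀ * J' (Fin n)))ᵀ * ((Matrix.diagonal (Sum.elim e e)
          * Matrix.diagonal (Sum.elim (fun k => (e k)⁻¹) (fun k => (e k)⁻¹))) * Sᵀ) := by
          rw [h1, Matrix.one_mul]
          simp only [Matrix.mul_assoc]
    _ = (S * (-(J' (Fin n) * Sᵀ * J' (Fin n))))ᵀ := by
          rw [hDgDi, Matrix.one_mul, Matrix.transpose_mul]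
    _ = 1 := by rw [h2, Matrix.transpose_one]
  · rw [Matrix.transpose_mul, Matrix.transpose_mul, Matrix.transpose_transpose,
      Matrix.diagonal_transpose, Matrix.mul_assoc]
  · have hJt : (J' (Fin n))ᵀ = -(J' (Fin n)) := J'_transpose (Fin n)
    have hconj := J'_conj_diag (Fin n) (fun k => (e k)⁻¹)
    calc Sᵀ * ((J' (Fin n))ᵀ
          * (S * Matrix.diagonal (Sum.elim (fun k => (e k)⁻¹) (fun k => (e k)⁻¹)) * Sᵀ)
          * J' (Fin n)) * S
        = -((Sᵀ * J' (Fin n) * S)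
            * (Matrix.diagonal (Sum.elim (fun k => (e k)⁻¹) (fun k => (e k)⁻¹))
              * (Sᵀ * J' (Fin n) * S))) := by
          rw [hJt]
          simp only [Matrix.neg_mul, Matrix.mul_neg, Matrix.mul_assoc]
    _ = -(J' (Fin n) * (Matrix.diagonal (Sum.elim (fun k => (e k)⁻¹) (fun k => (e k)⁻¹))
            * J' (Fin n))) := by rw [hS]
    _ = _ := by rw [← Matrix.mul_assoc, hconj, neg_neg]

lemma quad_congr {ι : Type*} [Fintype ι] (M S : Matrix ι ι ℝ) (y : ι → ℝ) :
    (S *ᵥ y) ⬝ᵥ (M *ᵥ (S *ᵥ y)) = y ⬝ᵥ ((Sᵀ * M * S) *ᵥ y) := by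
  rw [Matrix.dotProduct_mulVec, Matrix.dotProduct_mulVec, Matrix.vecMul_vecMul,
    ← Matrix.vecMul_transpose, Matrix.vecMul_vecMul, mul_assoc]
  exact (Matrix.dotProduct_mulVec y _ y).symm

lemma diag_quad {ι : Type*} [Fintype ι] [DecidableEq ι] (w y : ι → ℝ) :
    y ⬝ᵥ (Matrix.diagonal w *ᵥ y) = ∑ i, w i * y i ^ 2 := by
  simp only [dotProduct, Matrix.mulVec_diagonal]
  exact Finset.sum_congr rfl fun i _ => by ring

lemma inv_form_antitone {ι : Type*} [Fintype ι] [DecidableEq ι] (B B' Bi Bi' : Matrix ι ι ℝ)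
    (hBsymm : Bᵀ = B) (hBpsd : ∀ x, 0 ≤ x ⬝ᵥ (B *ᵥ x))
    (hBBi : B * Bi = 1) (hB'Bi' : B' * Bi' = 1)
    (hle : ∀ x, x ⬝ᵥ (B *ᵥ x) ≤ x ⬝ᵥ (B' *ᵥ x)) (p : ι → ℝ) :
    p ⬝ᵥ (Bi' *ᵥ p) ≤ p ⬝ᵥ (Bi *ᵥ p) := by
  have hBw : B *ᵥ (Bi *ᵥ p) = p := by
    rw [Matrix.mulVec_mulVec, hBBi, Matrix.one_mulVec]
  have hB'y : B' *ᵥ (Bi' *ᵥ p) = p := by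
    rw [Matrix.mulVec_mulVec, hB'Bi', Matrix.one_mulVec]
  set y := Bi' *ᵥ p with hy
  set w := Bi *ᵥ p with hw
  have hsym : ∀ u v : ι → ℝ, u ⬝ᵥ (B *ᵥ v) = (B *ᵥ u) ⬝ᵥ v := by
    intro u v
    rw [Matrix.dotProduct_mulVec]
    nth_rewrite 1 [← hBsymm]
    rw [Matrix.vecMul_transpose]
  have h0 : 0 ≤ (w - y) ⬝ᵥ (B *ᵥ (w - y)) := hBpsd _
  have hexp : (w - y) ⬝ᵥ (B *ᵥ (w - y))
      = w ⬝ᵥ p - y ⬝ᵥ p - (p ⬝ᵥ y - y ⬝ᵥ (B *ᵥ y)) := by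
    rw [Matrix.mulVec_sub, dotProduct_sub, sub_dotProduct,
      sub_dotProduct]
    have e1 : w ⬝ᵥ (B *ᵥ w) = w ⬝ᵥ p := by rw [hBw]
    have e2 : y ⬝ᵥ (B *ᵥ w) = y ⬝ᵥ p := by rw [hBw]
    have e3 : w ⬝ᵥ (B *ᵥ y) = p ⬝ᵥ y := by rw [hsym, hBw]
    rw [e1, e2, e3]
  have h2 : y ⬝ᵥ (B *ᵥ y) ≤ y ⬝ᵥ p := by
    have := hle y
    rwa [hB'y] at this
  have h3 : p ⬝ᵥ w = w ⬝ᵥ p := dotProduct_comm _ _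
  have h4 : p ⬝ᵥ y = y ⬝ᵥ p := dotProduct_comm _ _
  rw [hexp] at h0
  linarith

lemma exists_common_vec {n : ℕ} (j : Fin n) (Si Ti : Matrix (Fin n ⊕ Fin n) (Fin n ⊕ Fin n) ℝ) :
    ∃ x : Fin n ⊕ Fin n → ℝ, x ≠ 0 ∧
      (∀ k : Fin n, k < j → (Si *ᵥ x) (Sum.inl k) = 0 ∧ (Si *ᵥ x) (Sum.inr k) = 0) ∧
      (∀ k : Fin n, j < k → (Ti *ᵥ x) (Sum.inl k) = 0 ∧ (Ti *ᵥ x) (Sum.inr k) = 0) := by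
  classical
  let Θ : ((Fin n ⊕ Fin n) → ℝ) →ₗ[ℝ]
      (({ k : Fin n // k < j } ⊕ { k : Fin n // k < j }) → ℝ) ×
      (({ k : Fin n // j < k } ⊕ { k : Fin n // j < k }) → ℝ) :=
    LinearMap.prod
      ((LinearMap.funLeft ℝ ℝ (Sum.map Subtype.val Subtype.val)).comp (Matrix.mulVecLin Si))
      ((LinearMap.funLeft ℝ ℝ (Sum.map Subtype.val Subtype.val)).comp (Matrix.mulVecLin Ti))
  have c1 : Fintype.card { k : Fin n // k < j } = (j : ℕ) := by
    rw [Fintype.card_eq.mpr ⟨Equiv.subtypeEquivRight (fun k => (Set.mem_Iio).symm)⟩]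
    rw [Fintype.card_Iio, Fin.card_Iio]
  have c2 : Fintype.card { k : Fin n // j < k } = n - 1 - (j : ℕ) := by
    rw [Fintype.card_eq.mpr ⟨Equiv.subtypeEquivRight (fun k => (Set.mem_Ioi).symm)⟩]
    rw [Fintype.card_Ioi, Fin.card_Ioi]
  have hninj : ¬ Function.Injective Θ := by
    intro hinj
    have hle := LinearMap.finrank_le_finrank_of_injective hinj
    rw [Module.finrank_pi, Module.finrank_prod, Module.finrank_pi, Module.finrank_pi] at hle
    simp only [Fintype.card_sum, Fintype.card_fin, c1, c2] at hle
    have := j.isLt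
    omega
  rw [Function.not_injective_iff] at hninj
  obtain ⟨a, b, hab, hne⟩ := hninj
  refine ⟨a - b, sub_ne_zero_of_ne hne, ?_, ?_⟩
  · intro k hk
    have h : Θ (a - b) = 0 := by rw [map_sub, hab, sub_self]
    have h1 := congrArg Prod.fst h
    constructor
    · exact congrFun h1 (Sum.inl ⟨k, hk⟩)
    · exact congrFun h1 (Sum.inr ⟨k, hk⟩)
  · intro k hk
    have h : Θ (a - b) = 0 := by rw [map_sub, hab, sub_self]
    have h2 := congrArg Prod.snd h
    constructor
    · exact congrFun h2 (Sum.inl ⟨k, hk⟩)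
    · exact congrFun h2 (Sum.inr ⟨k, hk⟩)

lemma dot_abs_le {ι : Type*} [Fintype ι] [DecidableEq ι] (H : Matrix ι ι ℝ) (x : ι → ℝ) :
    |x ⬝ᵥ (H *ᵥ x)| ≤ ‖H‖ * (x ⬝ᵥ x) := by
  set X : EuclideanSpace ℝ ι := (WithLp.equiv 2 (ι → ℝ)).symm x with hX
  set Y : EuclideanSpace ℝ ι := (WithLp.equiv 2 (ι → ℝ)).symm (H *ᵥ x) with hY
  have h1 : x ⬝ᵥ (H *ᵥ x) = inner ℝ X Y := by
    simp [hX, hY, PiLp.inner_apply, RCLike.inner_apply, dotProduct, mul_comm]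
  have h2 : |(inner ℝ X Y : ℝ)| ≤ ‖X‖ * ‖Y‖ := abs_real_inner_le_norm X Y
  have h3 : ‖Y‖ ≤ ‖H‖ * ‖X‖ := Matrix.l2_opNorm_mulVec H X
  have h4 : x ⬝ᵥ x = ‖X‖ * ‖X‖ := by
    have : (inner ℝ X X : ℝ) = ‖X‖ * ‖X‖ := real_inner_self_eq_norm_mul_norm X
    rw [← this]
    simp only [hX, WithLp.equiv_symm_apply, PiLp.inner_apply, RCLike.inner_apply, conj_trivial,
      dotProduct]
  rw [h1, h4]
  calc |(inner ℝ X Y : ℝ)| ≤ ‖X‖ * ‖Y‖ := h2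
  _ ≤ ‖X‖ * (‖H‖ * ‖X‖) := by
      apply mul_le_mul_of_nonneg_left h3 (norm_nonneg X)
  _ = ‖H‖ * (‖X‖ * ‖X‖) := by ring

lemma norm_diag_le {ι : Type*} [Fintype ι] [DecidableEq ι] (g : ι → ℝ) (t : ℝ) (ht : 0 ≤ t)
    (hg : ∀ i, |g i| ≤ t) : ‖(Matrix.diagonal g : Matrix ι ι ℝ)‖ ≤ t := by
  rw [Matrix.l2_opNorm_def]
  apply ContinuousLinearMap.opNorm_le_bound _ ht
  intro X
  have happ : (LinearMap.toContinuousLinearMap (Matrix.toEuclideanLin (Matrix.diagonal g))) X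
      = (WithLp.equiv 2 (ι → ℝ)).symm (Matrix.diagonal g *ᵥ (WithLp.equiv 2 (ι → ℝ)) X) := rfl
  show ‖(LinearMap.toContinuousLinearMap (Matrix.toEuclideanLin (Matrix.diagonal g))) X‖ ≤ t * ‖X‖
  rw [happ]
  rw [EuclideanSpace.norm_eq, EuclideanSpace.norm_eq]
  rw [← Real.sqrt_sq ht, ← Real.sqrt_mul (by positivity)]
  apply Real.sqrt_le_sqrt
  rw [Finset.mul_sum]
  apply Finset.sum_le_sum
  intro i _
  simp only [WithLp.equiv_symm_apply, WithLp.ofLp_toLp, Matrix.mulVec_diagonal, Real.norm_eq_abs]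
  have h2 : |X i| = |(WithLp.equiv 2 (ι → ℝ)) X i| := rfl
  rw [h2]
  calc |g i * (WithLp.equiv 2 (ι → ℝ)) X i| ^ 2
      = |g i| ^ 2 * |(WithLp.equiv 2 (ι → ℝ)) X i| ^ 2 := by rw [abs_mul, mul_pow]
  _ ≤ t ^ 2 * |(WithLp.equiv 2 (ι → ℝ)) X i| ^ 2 := by
      apply mul_le_mul_of_nonneg_right (pow_le_pow_left₀ (abs_nonneg _) (hg i) 2) (by positivity)

lemma sympl_eig_mono {n : ℕ} (B B' S T : Matrix (Fin n ⊕ Fin n) (Fin n ⊕ Fin n) ℝ)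
    (hBsymm : Bᵀ = B) (hBpsd : ∀ x, 0 ≤ x ⬝ᵥ (B *ᵥ x))
    (hS : Sᵀ * J' (Fin n) * S = J' (Fin n)) (hT : Tᵀ * J' (Fin n) * T = J' (Fin n))
    (e f : Fin n → ℝ) (he : Monotone e) (hepos : ∀ k, 0 < e k)
    (hf : Monotone f) (hfpos : ∀ k, 0 < f k)
    (hSB : Sᵀ * B * S = Matrix.diagonal (Sum.elim e e))
    (hTB : Tᵀ * B' * T = Matrix.diagonal (Sum.elim f f))
    (hle : ∀ x, x ⬝ᵥ (B *ᵥ x) ≤ x ⬝ᵥ (B' *ᵥ x))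
    (j : Fin n) : e j ≤ f j := by
  classical
  obtain ⟨Si, Bi, hSi1, hSi2, hBBi, hBit, hBiD⟩ := sympl_pack B S hS e hepos hSB
  obtain ⟨Ti, Bi', hTi1, hTi2, hB'Bi', hBit', hBiD'⟩ := sympl_pack B' T hT f hfpos hTB
  obtain ⟨x, hx0, hxS, hxT⟩ := exists_common_vec j Si Ti
  set y := Si *ᵥ x with hy
  set z := Ti *ᵥ x with hz
  have hxy : x = S *ᵥ y := by rw [hy, Matrix.mulVec_mulVec, hSi2, Matrix.one_mulVec]
  have hxz : x = T *ᵥ z := by rw [hz, Matrix.mulVec_mulVec, hTi2, Matrix.one_mulVec]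
  have hqB : x ⬝ᵥ (B *ᵥ x) = ∑ i, Sum.elim e e i * y i ^ 2 := by
    conv_lhs => rw [hxy]
    rw [quad_congr, hSB, diag_quad]
  have hqB' : x ⬝ᵥ (B' *ᵥ x) = ∑ i, Sum.elim f f i * z i ^ 2 := by
    conv_lhs => rw [hxz]
    rw [quad_congr, hTB, diag_quad]
  have hmB : (J' (Fin n) *ᵥ x) ⬝ᵥ (Bi *ᵥ (J' (Fin n) *ᵥ x))
      = ∑ i, Sum.elim (fun k => (e k)⁻¹) (fun k => (e k)⁻¹) i * y i ^ 2 := by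
    rw [quad_congr Bi (J' (Fin n)) x]
    conv_lhs => rw [hxy]
    rw [quad_congr, hBiD, diag_quad]
  have hmB' : (J' (Fin n) *ᵥ x) ⬝ᵥ (Bi' *ᵥ (J' (Fin n) *ᵥ x))
      = ∑ i, Sum.elim (fun k => (f k)⁻¹) (fun k => (f k)⁻¹) i * z i ^ 2 := by
    rw [quad_congr Bi' (J' (Fin n)) x]
    conv_lhs => rw [hxz]
    rw [quad_congr, hBiD', diag_quad]
  -- support facts
  have hysupp : ∀ i, y i ≠ 0 → e j ≤ Sum.elim e e i := by
    rintro (k | k) hyi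
    · by_contra hc
      have hk : k < j := by
        by_contra hk
        exact hc (he (le_of_not_gt hk))
      exact hyi ((hxS k hk).1)
    · by_contra hc
      have hk : k < j := by
        by_contra hk
        exact hc (he (le_of_not_gt hk))
      exact hyi ((hxS k hk).2)
  have hzsupp : ∀ i, z i ≠ 0 → Sum.elim f f i ≤ f j := by
    rintro (k | k) hzi
    · by_contra hc
      have hk : j < k := by
        by_contra hk
        exact hc (hf (le_of_not_gt hk))
      exact hzi ((hxT k hk).1)
    · by_contra hc
      have hk : j < k := by
        by_contra hk
        exact hc (hf (le_of_not_gt hk))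
      exact hzi ((hxT k hk).2)
  have hwpos : ∀ i, 0 < Sum.elim e e i := by rintro (k | k) <;> exact hepos k
  have hvpos : ∀ i, 0 < Sum.elim f f i := by rintro (k | k) <;> exact hfpos k
  -- key termwise inequalities
  have key1 : e j ^ 2 * (∑ i, Sum.elim (fun k => (e k)⁻¹) (fun k => (e k)⁻¹) i * y i ^ 2)
      ≤ ∑ i, Sum.elim e e i * y i ^ 2 := by
    rw [Finset.mul_sum]
    apply Finset.sum_le_sum
    intro i _
    by_cases hyi : y i = 0
    · simp [hyi]
    · have h1 : e j ≤ Sum.elim e e i := hysupp i hyi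
      have h2 : 0 < Sum.elim e e i := hwpos i
      have h3 : Sum.elim (fun k => (e k)⁻¹) (fun k => (e k)⁻¹) i = (Sum.elim e e i)⁻¹ := by
        rcases i with k | k <;> rfl
      rw [h3]
      have h4 : e j ^ 2 ≤ (Sum.elim e e i) ^ 2 := by nlinarith [hepos j]
      calc e j ^ 2 * ((Sum.elim e e i)⁻¹ * y i ^ 2)
          ≤ (Sum.elim e e i) ^ 2 * ((Sum.elim e e i)⁻¹ * y i ^ 2) := by
            apply mul_le_mul_of_nonneg_right h4
            positivity
      _ = Sum.elim e e i * y i ^ 2 := by field_simp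
  have key2 : ∑ i, Sum.elim f f i * z i ^ 2
      ≤ f j ^ 2 * (∑ i, Sum.elim (fun k => (f k)⁻¹) (fun k => (f k)⁻¹) i * z i ^ 2) := by
    rw [Finset.mul_sum]
    apply Finset.sum_le_sum
    intro i _
    by_cases hzi : z i = 0
    · simp [hzi]
    · have h1 : Sum.elim f f i ≤ f j := hzsupp i hzi
      have h2 : 0 < Sum.elim f f i := hvpos i
      have h3 : Sum.elim (fun k => (f k)⁻¹) (fun k => (f k)⁻¹) i = (Sum.elim f f i)⁻¹ := by
        rcases i with k | k <;> rfl
      rw [h3]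
      have h4 : (Sum.elim f f i) ^ 2 ≤ f j ^ 2 := by nlinarith
      calc Sum.elim f f i * z i ^ 2
          = (Sum.elim f f i) ^ 2 * ((Sum.elim f f i)⁻¹ * z i ^ 2) := by field_simp
      _ ≤ f j ^ 2 * ((Sum.elim f f i)⁻¹ * z i ^ 2) := by
            apply mul_le_mul_of_nonneg_right h4
            positivity
  -- positivity of mB
  have hy0 : y ≠ 0 := by
    intro h
    apply hx0
    rw [hxy, h, Matrix.mulVec_zero]
  obtain ⟨i0, hi0⟩ := Function.ne_iff.mp hy0
  have hmBpos : 0 < ∑ i, Sum.elim (fun k => (e k)⁻¹) (fun k => (e k)⁻¹) i * y i ^ 2 := by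
    apply Finset.sum_pos'
    · intro i _
      have h3 : Sum.elim (fun k => (e k)⁻¹) (fun k => (e k)⁻¹) i = (Sum.elim e e i)⁻¹ := by
        rcases i with k | k <;> rfl
      rw [h3]
      have := hwpos i
      positivity
    · refine ⟨i0, Finset.mem_univ _, ?_⟩
      have h3 : Sum.elim (fun k => (e k)⁻¹) (fun k => (e k)⁻¹) i0 = (Sum.elim e e i0)⁻¹ := by
        rcases i0 with k | k <;> rfl
      rw [h3]
      have := hwpos i0
      have h5 : 0 < y i0 ^ 2 :=
        lt_of_le_of_ne (sq_nonneg _) (Ne.symm (pow_ne_zero 2 hi0))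
      positivity
  -- antitone step
  have hanti : (J' (Fin n) *ᵥ x) ⬝ᵥ (Bi' *ᵥ (J' (Fin n) *ᵥ x))
      ≤ (J' (Fin n) *ᵥ x) ⬝ᵥ (Bi *ᵥ (J' (Fin n) *ᵥ x)) :=
    inv_form_antitone B B' Bi Bi' hBsymm hBpsd hBBi hB'Bi' hle _
  -- final chain
  have chain : e j ^ 2 * (∑ i, Sum.elim (fun k => (e k)⁻¹) (fun k => (e k)⁻¹) i * y i ^ 2)
      ≤ f j ^ 2 * (∑ i, Sum.elim (fun k => (e k)⁻¹) (fun k => (e k)⁻¹) i * y i ^ 2) := by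
    calc e j ^ 2 * (∑ i, Sum.elim (fun k => (e k)⁻¹) (fun k => (e k)⁻¹) i * y i ^ 2)
        ≤ ∑ i, Sum.elim e e i * y i ^ 2 := key1
    _ = x ⬝ᵥ (B *ᵥ x) := hqB.symm
    _ ≤ x ⬝ᵥ (B' *ᵥ x) := hle x
    _ = ∑ i, Sum.elim f f i * z i ^ 2 := hqB'
    _ ≤ f j ^ 2 * (∑ i, Sum.elim (fun k => (f k)⁻¹) (fun k => (f k)⁻¹) i * z i ^ 2) := key2
    _ = f j ^ 2 * ((J' (Fin n) *ᵥ x) ⬝ᵥ (Bi' *ᵥ (J' (Fin n) *ᵥ x))) := by rw [hmB']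
    _ ≤ f j ^ 2 * ((J' (Fin n) *ᵥ x) ⬝ᵥ (Bi *ᵥ (J' (Fin n) *ᵥ x))) := by
        apply mul_le_mul_of_nonneg_left hanti
        positivity
    _ = f j ^ 2 * (∑ i, Sum.elim (fun k => (e k)⁻¹) (fun k => (e k)⁻¹) i * y i ^ 2) := by
        rw [hmB]
  have hsq : e j ^ 2 ≤ f j ^ 2 := le_of_mul_le_mul_right
    (by simpa [mul_comm] using chain) hmBpos
  nlinarith [hepos j, hfpos j]

end Auxiliary

/-- Equation (13) in the proof of Proposition 1: for `A = D ⊕ D` positive definite with `D`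
diagonal with positive nondecreasing entries, every `S̃ ∈ Sp(2n; A+H)` satisfies
`S̃ᵀ(A+H)S̃ = A + O(‖H‖)`. -/
theorem first_order_diagonalization (n : ℕ) (d : Fin n → ℝ)
    (hd : Monotone d) (hdpos : ∀ j, 0 < d j)
    (A : Matrix (Fin n ⊕ Fin n) (Fin n ⊕ Fin n) ℝ)
    (hA : A = Matrix.fromBlocks (Matrix.diagonal d) 0 0 (Matrix.diagonal d))
    (hApd : A.PosDef) :
    ∃ c > 0, ∃ δ > 0,
      ∀ H : Matrix (Fin n ⊕ Fin n) (Fin n ⊕ Fin n) ℝ, H.IsSymm → ‖H‖ < δ → (A + H).PosDef →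
      ∀ S' : Matrix (Fin n ⊕ Fin n) (Fin n ⊕ Fin n) ℝ,
        S'ᵀ * J' (Fin n) * S' = J' (Fin n) →
        (∃ e : Fin n → ℝ, Monotone e ∧ (∀ j, 0 < e j) ∧
          S'ᵀ * (A + H) * S' = Matrix.fromBlocks (Matrix.diagonal e) 0 0 (Matrix.diagonal e)) →
        ‖S'ᵀ * (A + H) * S' - A‖ ≤ c * ‖H‖ := by
  classical
  rcases Nat.eq_zero_or_pos n with hn | hn
  · subst hn
    refine ⟨1, one_pos, 1, one_pos, ?_⟩
    intro H _ _ _ S' _ _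
    have hz : S'ᵀ * (A + H) * S' - A = 0 := by
      ext i j
      exact isEmptyElim i
    rw [hz, norm_zero, one_mul]
    exact norm_nonneg H
  · refine ⟨1, one_pos, d ⟨0, hn⟩, hdpos ⟨0, hn⟩, ?_⟩
    rintro H Hsym HnormLt hBpd S' hSsymp ⟨e, he, hepos, hdiagS⟩
    have ht0 : (0 : ℝ) ≤ ‖H‖ := norm_nonneg H
    have hAd : A = Matrix.diagonal (Sum.elim d d) := by
      rw [hA, Matrix.fromBlocks_diagonal]
    have hdiagS' : S'ᵀ * (A + H) * S' = Matrix.diagonal (Sum.elim e e) := by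
      rw [hdiagS, Matrix.fromBlocks_diagonal]
    have habs : ∀ x : Fin n ⊕ Fin n → ℝ, |x ⬝ᵥ (H *ᵥ x)| ≤ ‖H‖ * (x ⬝ᵥ x) :=
      fun x => dot_abs_le H x
    have htlt : ∀ k, ‖H‖ < d k := fun k =>
      lt_of_lt_of_le HnormLt (hd (by simp [Fin.le_def]))
    have h1symp : (1 : Matrix (Fin n ⊕ Fin n) (Fin n ⊕ Fin n) ℝ)ᵀ * J' (Fin n) * 1
        = J' (Fin n) := by simp
    have hsmul : (‖H‖ • (1 : Matrix (Fin n ⊕ Fin n) (Fin n ⊕ Fin n) ℝ))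
        = Matrix.diagonal (fun _ => ‖H‖) := by
      ext i j
      rcases eq_or_ne i j with h | h
      · subst h; simp
      · simp [Matrix.one_apply_ne h, Matrix.diagonal_apply_ne _ h]
    have hplus : A + ‖H‖ • (1 : Matrix (Fin n ⊕ Fin n) (Fin n ⊕ Fin n) ℝ)
        = Matrix.diagonal (Sum.elim (fun k => d k + ‖H‖) (fun k => d k + ‖H‖)) := by
      rw [hAd, hsmul, Matrix.diagonal_add]
      exact congrArg Matrix.diagonal (funext fun i => by rcases i with k | k <;> rfl)
    have hminus : A - ‖H‖ • (1 : Matrix (Fin n ⊕ Fin n) (Fin n ⊕ Fin n) ℝ)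
        = Matrix.diagonal (Sum.elim (fun k => d k - ‖H‖) (fun k => d k - ‖H‖)) := by
      rw [hAd, hsmul, Matrix.diagonal_sub]
      exact congrArg Matrix.diagonal (funext fun i => by rcases i with k | k <;> rfl)
    have hBsym : (A + H)ᵀ = A + H := by
      rw [Matrix.transpose_add, hAd, Matrix.diagonal_transpose, Hsym.eq]
    have hBpsd : ∀ x : Fin n ⊕ Fin n → ℝ, 0 ≤ x ⬝ᵥ ((A + H) *ᵥ x) := by
      intro x
      have h := hBpd.posSemidef.dotProduct_mulVec_nonneg x
      simpa using h
    have hdotsum : ∀ x : Fin n ⊕ Fin n → ℝ, x ⬝ᵥ x = ∑ i, x i ^ 2 := by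
      intro x
      simp [dotProduct, sq]
    have hsmuldot : ∀ x : Fin n ⊕ Fin n → ℝ,
        x ⬝ᵥ ((‖H‖ • (1 : Matrix (Fin n ⊕ Fin n) (Fin n ⊕ Fin n) ℝ)) *ᵥ x)
          = ‖H‖ * (x ⬝ᵥ x) := by
      intro x
      rw [Matrix.smul_mulVec, Matrix.one_mulVec, dotProduct_smul, smul_eq_mul]
    -- upper bound : e j ≤ d j + ‖H‖
    have upper : ∀ j, e j ≤ d j + ‖H‖ := by
      intro j
      refine sympl_eig_mono (A + H) (A + ‖H‖ • 1) S' 1 hBsym hBpsd hSsymp h1symp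
        e (fun k => d k + ‖H‖) he hepos
        (fun a b hab => by simpa using add_le_add_right (hd hab) ‖H‖)
        (fun k => by show (0:ℝ) < d k + ‖H‖; have := hdpos k; linarith)
        hdiagS' (by simpa using hplus) ?_ j
      intro x
      have h1 := (abs_le.mp (habs x)).2
      have e1 : x ⬝ᵥ ((A + H) *ᵥ x) = x ⬝ᵥ (A *ᵥ x) + x ⬝ᵥ (H *ᵥ x) := by
        rw [Matrix.add_mulVec, dotProduct_add]
      have e2 : x ⬝ᵥ ((A + ‖H‖ • 1) *ᵥ x) = x ⬝ᵥ (A *ᵥ x) + ‖H‖ * (x ⬝ᵥ x) := by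
        rw [Matrix.add_mulVec, dotProduct_add, hsmuldot]
      rw [e1, e2]
      linarith
    -- lower bound : d j - ‖H‖ ≤ e j
    have lower : ∀ j, d j - ‖H‖ ≤ e j := by
      intro j
      refine sympl_eig_mono (A - ‖H‖ • 1) (A + H) 1 S'
        (by rw [hminus, Matrix.diagonal_transpose]) ?_ h1symp hSsymp
        (fun k => d k - ‖H‖) e
        (fun a b hab => by simpa using sub_le_sub_right (hd hab) ‖H‖)
        (fun k => by show (0:ℝ) < d k - ‖H‖; have := htlt k; linarith)
        he hepos (by simpa using hminus) hdiagS' ?_ j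
      · intro x
        rw [hminus, diag_quad]
        apply Finset.sum_nonneg
        intro i _
        have hge : 0 ≤ Sum.elim (fun k => d k - ‖H‖) (fun k => d k - ‖H‖) i := by
          rcases i with k | k <;> simp only [Sum.elim_inl, Sum.elim_inr] <;>
            exact le_of_lt (sub_pos.mpr (htlt k))
        positivity
      · intro x
        have h1 := (abs_le.mp (habs x)).1
        have e1 : x ⬝ᵥ ((A + H) *ᵥ x) = x ⬝ᵥ (A *ᵥ x) + x ⬝ᵥ (H *ᵥ x) := by
          rw [Matrix.add_mulVec, dotProduct_add]
        have e2 : x ⬝ᵥ ((A - ‖H‖ • 1) *ᵥ x) = x ⬝ᵥ (A *ᵥ x) - ‖H‖ * (x ⬝ᵥ x) := by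
          rw [Matrix.sub_mulVec, dotProduct_sub, hsmuldot]
        rw [e1, e2]
        linarith
    -- conclusion
    rw [hdiagS', hAd, one_mul, Matrix.diagonal_sub]
    apply norm_diag_le _ ‖H‖ ht0
    intro i
    rcases i with k | k <;>
      · simp only [Sum.elim_inl, Sum.elim_inr]
        exact abs_le.mpr ⟨by linarith [lower k], by linarith [upper k]⟩
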